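/- arXiv:2301.07994 — 2 statements merged into one kernel-verified Lean document; each statement's English description precedes it below -/
import Mathlib

section
/- Let $f: \mathbb{S}^{d-1} \to \mathbb{R}$ be strictly positive Lipschitz, and for $g \in \mathrm{Lip}(\mathbb{S}^{d-1})$ define $V_g(y) = \frac{g(\omega_y)}{f(\omega_y)} y$ on $\Omega_f$ with $V_g(0)=0$. Then the volume-change functional satisfies $\int_{\Omega_f} \mathrm{div}\left(\frac{g(\omega_y)}{f(\omega_y)} y\right) dy = \int_{\mathbb{S}^{d-1}} g(\omega) f^{d-1}(\omega)\, d\omega$. -/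
open Metric Set MeasureTheory

theorem lipschitzOnWith_normSmul {E : Type*} [NormedAddCommGroup E] [NormedSpace ℝ E]
    {a : ℝ} (ha : 0 < a) :
    LipschitzOnWith (2 * a.toNNReal⁻¹) (fun z : E => ‖z‖⁻¹ • z) {z | a ≤ ‖z‖} := by
  rw [lipschitzOnWith_iff_dist_le_mul]
  intro x hx y hy
  simp only [mem_setOf_eq] at hx hy
  have hx0 : 0 < ‖x‖ := lt_of_lt_of_le ha hx
  have hy0 : 0 < ‖y‖ := lt_of_lt_of_le ha hy
  have key : ‖x‖⁻¹ • x - ‖y‖⁻¹ • y = ‖x‖⁻¹ • (x - y) + (‖x‖⁻¹ - ‖y‖⁻¹) • y := by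
    module
  have habs : |‖x‖⁻¹ - ‖y‖⁻¹| ≤ ‖x - y‖ * (‖x‖⁻¹ * ‖y‖⁻¹) := by
    have h1 : ‖x‖⁻¹ - ‖y‖⁻¹ = (‖y‖ - ‖x‖) * (‖x‖⁻¹ * ‖y‖⁻¹) := by
      field_simp
    rw [h1, abs_mul, abs_of_pos (mul_pos (inv_pos.2 hx0) (inv_pos.2 hy0))]
    gcongr
    calc |‖y‖ - ‖x‖| ≤ ‖y - x‖ := abs_norm_sub_norm_le y x
      _ = ‖x - y‖ := norm_sub_rev y x
  calc dist (‖x‖⁻¹ • x) (‖y‖⁻¹ • y) = ‖‖x‖⁻¹ • x - ‖y‖⁻¹ • y‖ := dist_eq_norm _ _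
    _ ≤ ‖‖x‖⁻¹ • (x - y)‖ + ‖(‖x‖⁻¹ - ‖y‖⁻¹) • y‖ := by rw [key]; exact norm_add_le _ _
    _ ≤ ‖x‖⁻¹ * ‖x - y‖ + (‖x - y‖ * (‖x‖⁻¹ * ‖y‖⁻¹)) * ‖y‖ := by
        rw [norm_smul, norm_smul, Real.norm_eq_abs, Real.norm_eq_abs,
          abs_of_pos (inv_pos.2 hx0)]
        gcongr
    _ = 2 * ‖x‖⁻¹ * ‖x - y‖ := by field_simp; ring
    _ ≤ 2 * a⁻¹ * ‖x - y‖ := by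
        have : ‖x‖⁻¹ ≤ a⁻¹ := inv_anti₀ ha hx
        have hn : (0:ℝ) ≤ ‖x - y‖ := norm_nonneg _
        nlinarith
    _ = (2 * a.toNNReal⁻¹ : NNReal) * dist x y := by
        rw [dist_eq_norm]
        push_cast
        rw [Real.coe_toNNReal _ ha.le]

theorem trace_smulRight' {E : Type*} [NormedAddCommGroup E] [NormedSpace ℝ E]
    [FiniteDimensional ℝ E] (l : E →L[ℝ] ℝ) (v : E) :
    LinearMap.trace ℝ E ((l.smulRight v : E →L[ℝ] E) : E →ₗ[ℝ] E) = l v := by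
  have h1 : ((l.smulRight v : E →L[ℝ] E) : E →ₗ[ℝ] E)
      = (LinearMap.toSpanSingleton ℝ E v) ∘ₗ (l : E →ₗ[ℝ] ℝ) := by
    ext x; simp [LinearMap.toSpanSingleton, LinearMap.smulRight]
  rw [h1, LinearMap.trace_comp_comm']
  set q : ℝ →ₗ[ℝ] ℝ := (l : E →ₗ[ℝ] ℝ) ∘ₗ LinearMap.toSpanSingleton ℝ E v with hq
  have h2 : q = (q 1) • LinearMap.id := by
    apply LinearMap.ext; intro t
    have : t • (1:ℝ) = t := by simp
    rw [LinearMap.smul_apply, LinearMap.id_apply, ← this, q.map_smul]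
    simp [smul_eq_mul, mul_comm]
  rw [h2, LinearMap.map_smul, LinearMap.trace_id, smul_eq_mul]
  simp [hq, LinearMap.toSpanSingleton]

theorem trace_fderiv_radial {E : Type*} [NormedAddCommGroup E] [NormedSpace ℝ E]
    [FiniteDimensional ℝ E] (h : E → ℝ) (x : E) (hd : DifferentiableAt ℝ h x)
    (hhom : ∀ᶠ t in nhds (1:ℝ), h (t • x) = h x)
    (htr : ∀ (l : E →L[ℝ] ℝ) (v : E),
      LinearMap.trace ℝ E ((l.smulRight v : E →L[ℝ] E) : E →ₗ[ℝ] E) = l v) :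
    LinearMap.trace ℝ E ((fderiv ℝ (fun z => h z • z) x : E →ₗ[ℝ] E))
      = (Module.finrank ℝ E : ℝ) * h x := by
  -- Euler identity: fderiv h x x = 0
  have heuler : fderiv ℝ h x x = 0 := by
    have h1 : HasDerivAt (fun t : ℝ => h (t • x)) (fderiv ℝ h x x) 1 := by
      have hsm : HasDerivAt (fun t : ℝ => t • x) x 1 := by
        simpa using (hasDerivAt_id (1:ℝ)).smul_const x
      have hd' : HasFDerivAt h (fderiv ℝ h x) ((1:ℝ) • x) := by
        rw [one_smul]; exact hd.hasFDerivAt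
      exact hd'.comp_hasDerivAt 1 hsm
    have h2 : HasDerivAt (fun t : ℝ => h (t • x)) 0 1 :=
      (hasDerivAt_const (1:ℝ) (h x)).congr_of_eventuallyEq hhom
    exact h1.unique h2
  -- fderiv of the radial field
  have hF : HasFDerivAt (fun z => h z • z)
      (h x • ContinuousLinearMap.id ℝ E + (fderiv ℝ h x).smulRight x) x :=
    hd.hasFDerivAt.smul (hasFDerivAt_id x)
  rw [hF.fderiv]
  have hco : ((h x • ContinuousLinearMap.id ℝ E + (fderiv ℝ h x).smulRight x : E →L[ℝ] E) :
      E →ₗ[ℝ] E) = h x • LinearMap.id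
        + (((fderiv ℝ h x).smulRight x : E →L[ℝ] E) : E →ₗ[ℝ] E) := by
    apply LinearMap.ext; intro z; simp
  rw [hco, map_add, LinearMap.map_smul, LinearMap.trace_id, htr, heuler, smul_eq_mul, add_zero,
    mul_comm]

section helpers
variable {E : Type*} [NormedAddCommGroup E] [NormedSpace ℝ E]

theorem normSmul_smul {t : ℝ} (ht : 0 < t) {x : E} (hx : x ≠ 0) :
    ‖t • x‖⁻¹ • (t • x) = ‖x‖⁻¹ • x := by
  have hx0 : ‖x‖ ≠ 0 := norm_ne_zero_iff.2 hx
  rw [norm_smul, Real.norm_eq_abs, abs_of_pos ht, smul_smul]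
  congr 1
  field_simp

theorem normSmul_sphere {ω : E} (hω : ω ∈ sphere (0 : E) 1) : ‖ω‖⁻¹ • ω = ω := by
  rw [mem_sphere_zero_iff_norm] at hω
  rw [hω, inv_one, one_smul]

theorem normSmul_mem_sphere {x : E} (hx : x ≠ 0) : ‖x‖⁻¹ • x ∈ sphere (0 : E) 1 := by
  rw [mem_sphere_zero_iff_norm, norm_smul, norm_inv, norm_norm,
    inv_mul_cancel₀ (norm_ne_zero_iff.2 hx)]

end helpers

theorem divergence_radial_field_aux {E : Type*} [NormedAddCommGroup E] [NormedSpace ℝ E] [FiniteDimensional ℝ E]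
    [MeasurableSpace E] [BorelSpace E]
    (μ : Measure E) [μ.IsAddHaarMeasure] {d : ℕ} (hdim : Module.finrank ℝ E = d) (hd : 0 < d)
    (f g : E → ℝ)
    (hfpos : ∀ ω ∈ sphere (0 : E) 1, 0 < f ω)
    (Kf : NNReal) (hflip : LipschitzOnWith Kf f (sphere (0 : E) 1))
    (Kg : NNReal) (hglip : LipschitzOnWith Kg g (sphere (0 : E) 1)) :
    (∫ y in {x : E | x = 0 ∨ ‖x‖ < f (‖x‖⁻¹ • x)},
        LinearMap.trace ℝ E
          ((fderiv ℝ (fun z : E => (g (‖z‖⁻¹ • z) / f (‖z‖⁻¹ • z)) • z) y) : E →ₗ[ℝ] E) ∂μ)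
      = ∫ ω : sphere (0 : E) 1, g (ω : E) * f (ω : E) ^ (d - 1) ∂μ.toSphere := by
  haveI : Nontrivial E := Module.nontrivial_of_finrank_pos (R := ℝ) (by rw [hdim]; exact hd)
  -- basic continuity facts
  have hncont : ContinuousOn (fun z : E => ‖z‖⁻¹ • z) {(0:E)}ᶜ :=
    ((continuous_norm.continuousOn.inv₀ (fun x hx => norm_ne_zero_iff.2 hx)).smul
      continuousOn_id)
  have hnmaps : MapsTo (fun z : E => ‖z‖⁻¹ • z) {(0:E)}ᶜ (sphere (0:E) 1) :=
    fun x hx => normSmul_mem_sphere hx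
  have hF1cont : ContinuousOn (fun z : E => f (‖z‖⁻¹ • z)) {(0:E)}ᶜ :=
    hflip.continuousOn.comp hncont hnmaps
  -- the open set Ω'
  set Ω' : Set E := {x : E | x ≠ 0 ∧ ‖x‖ < f (‖x‖⁻¹ • x)} with hΩ'
  have hΩ'open : IsOpen Ω' := by
    have : Ω' = {(0:E)}ᶜ ∩ (fun x : E => f (‖x‖⁻¹ • x) - ‖x‖) ⁻¹' Ioi 0 := by
      ext x
      simp only [hΩ', mem_setOf_eq, mem_inter_iff, mem_compl_iff, mem_singleton_iff,
        mem_preimage, mem_Ioi, sub_pos]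
    rw [this]
    exact ContinuousOn.isOpen_inter_preimage (hF1cont.sub continuous_norm.continuousOn)
      (isOpen_compl_singleton) isOpen_Ioi
  have hΩeq : {x : E | x = 0 ∨ ‖x‖ < f (‖x‖⁻¹ • x)} = {(0:E)} ∪ Ω' := by
    ext x
    by_cases hx : x = 0 <;> simp [hΩ', hx]
  have hΩmeas : MeasurableSet {x : E | x = 0 ∨ ‖x‖ < f (‖x‖⁻¹ • x)} := by
    rw [hΩeq]
    exact (measurableSet_singleton 0).union hΩ'open.measurableSet
  -- a.e. differentiability of g ∘ n and f ∘ n away from 0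
  have hae_diff : ∀ᵐ x ∂μ, x ≠ 0 →
      (DifferentiableAt ℝ (fun z : E => g (‖z‖⁻¹ • z)) x ∧
       DifferentiableAt ℝ (fun z : E => f (‖z‖⁻¹ • z)) x) := by
    have hak : ∀ k : ℕ, (0:ℝ) < ((k:ℝ)+1)⁻¹ := fun k => by positivity
    have hUopen : ∀ k : ℕ, IsOpen {z : E | ((k:ℝ)+1)⁻¹ < ‖z‖} :=
      fun k => isOpen_lt continuous_const continuous_norm
    have hUsub : ∀ k : ℕ, {z : E | ((k:ℝ)+1)⁻¹ < ‖z‖} ⊆ {z : E | ((k:ℝ)+1)⁻¹ ≤ ‖z‖} :=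
      fun k z hz => mem_setOf_eq ▸ le_of_lt hz
    have hmapsk : ∀ k : ℕ, MapsTo (fun z : E => ‖z‖⁻¹ • z)
        {z : E | ((k:ℝ)+1)⁻¹ ≤ ‖z‖} (sphere (0:E) 1) := by
      intro k x hx
      have : x ≠ 0 := by
        intro h
        rw [h] at hx
        simp only [mem_setOf_eq, norm_zero] at hx
        exact absurd hx (not_le.2 (hak k))
      exact normSmul_mem_sphere this
    have hGlip : ∀ k : ℕ, LipschitzOnWith (Kg * (2 * (((k:ℝ)+1)⁻¹).toNNReal⁻¹))
        (fun z : E => g (‖z‖⁻¹ • z)) {z : E | ((k:ℝ)+1)⁻¹ < ‖z‖} :=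
      fun k => (hglip.comp (lipschitzOnWith_normSmul (hak k)) (hmapsk k)).mono (hUsub k)
    have hFlip : ∀ k : ℕ, LipschitzOnWith (Kf * (2 * (((k:ℝ)+1)⁻¹).toNNReal⁻¹))
        (fun z : E => f (‖z‖⁻¹ • z)) {z : E | ((k:ℝ)+1)⁻¹ < ‖z‖} :=
      fun k => (hflip.comp (lipschitzOnWith_normSmul (hak k)) (hmapsk k)).mono (hUsub k)
    have hGae := ae_all_iff.2 fun k : ℕ => (hGlip k).ae_differentiableWithinAt_of_mem (μ := μ)
    have hFae := ae_all_iff.2 fun k : ℕ => (hFlip k).ae_differentiableWithinAt_of_mem (μ := μ)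
    filter_upwards [hGae, hFae] with x hxG hxF hx0
    have hnx : 0 < ‖x‖ := norm_pos_iff.2 hx0
    obtain ⟨k, hk⟩ := exists_nat_gt ‖x‖⁻¹
    have hk1 : ‖x‖⁻¹ < (k:ℝ) + 1 := hk.trans (lt_add_one _)
    have hmem : ((k:ℝ)+1)⁻¹ < ‖x‖ := by
      rw [inv_lt_comm₀ (by positivity) hnx]
      exact hk1
    constructor
    · exact (hxG k hmem).differentiableAt ((hUopen k).mem_nhds hmem)
    · exact (hxF k hmem).differentiableAt ((hUopen k).mem_nhds hmem)
  -- a.e. divergence identity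
  have hae_trace : ∀ᵐ x ∂μ, x ≠ 0 →
      LinearMap.trace ℝ E ((fderiv ℝ (fun z : E =>
          (g (‖z‖⁻¹ • z) / f (‖z‖⁻¹ • z)) • z) x : E →ₗ[ℝ] E))
        = (d : ℝ) * (g (‖x‖⁻¹ • x) / f (‖x‖⁻¹ • x)) := by
    filter_upwards [hae_diff] with x hx hx0
    obtain ⟨hgd, hfd⟩ := hx hx0
    have hsph := normSmul_mem_sphere hx0
    have hdd : DifferentiableAt ℝ (fun z : E => g (‖z‖⁻¹ • z) / f (‖z‖⁻¹ • z)) x :=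
      hgd.mul (hfd.inv (ne_of_gt (hfpos _ hsph)))
    have hhom : ∀ᶠ t in nhds (1:ℝ),
        (fun z : E => g (‖z‖⁻¹ • z) / f (‖z‖⁻¹ • z)) (t • x)
          = (fun z : E => g (‖z‖⁻¹ • z) / f (‖z‖⁻¹ • z)) x := by
      filter_upwards [eventually_gt_nhds zero_lt_one] with t ht
      simp only [normSmul_smul ht hx0]
    have := trace_fderiv_radial (fun z : E => g (‖z‖⁻¹ • z) / f (‖z‖⁻¹ • z)) x hdd hhom
      (fun l v => trace_smulRight' l v)
    rw [this, hdim]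
  -- zero is a.e. avoided
  have h0 : ∀ᵐ x ∂μ, x ≠ 0 := by
    rw [ae_iff]
    simpa using measure_singleton (0:E)
  -- step 1 : replace integrand
  have step1 : (∫ y in {x : E | x = 0 ∨ ‖x‖ < f (‖x‖⁻¹ • x)},
      LinearMap.trace ℝ E ((fderiv ℝ (fun z : E =>
          (g (‖z‖⁻¹ • z) / f (‖z‖⁻¹ • z)) • z) y : E →ₗ[ℝ] E)) ∂μ)
      = ∫ y in Ω', (d : ℝ) * (g (‖y‖⁻¹ • y) / f (‖y‖⁻¹ • y)) ∂μ := by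
    rw [setIntegral_congr_ae hΩmeas (by
      filter_upwards [hae_trace, h0] with x hx hx0 _
      exact hx hx0)]
    apply setIntegral_congr_set
    rw [hΩeq, Filter.eventuallyEq_set]
    filter_upwards [h0] with x h1
    simp [hΩ', h1]
  rw [step1]
  -- step 2 : polar coordinates
  have hΩ'meas : MeasurableSet Ω' := hΩ'open.measurableSet
  have hΩ'sub : Ω' ⊆ {(0:E)}ᶜ := fun x hx => hx.1
  obtain ⟨Cg, hCg⟩ := (isCompact_sphere (0:E) 1).exists_bound_of_continuousOn hglip.continuousOn
  obtain ⟨Cf, hCf⟩ := (isCompact_sphere (0:E) 1).exists_bound_of_continuousOn hflip.continuousOn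
  have hsne : (sphere (0:E) 1).Nonempty := NormedSpace.sphere_nonempty.mpr zero_le_one
  obtain ⟨ω₀, hω₀, hmin'⟩ :=
    (isCompact_sphere (0:E) 1).exists_isMinOn hsne hflip.continuousOn
  have hmin : ∀ ω ∈ sphere (0:E) 1, f ω₀ ≤ f ω := fun ω hω => hmin' hω
  have hc : 0 < f ω₀ := hfpos _ hω₀
  have hCf0 : 0 ≤ Cf := le_trans (norm_nonneg _) (hCf _ hω₀)
  have hmp := μ.measurePreserving_homeomorphUnitSphereProd
  rw [hdim] at hmp
  set S : Set (sphere (0:E) 1 × Ioi (0:ℝ)) := {q | (q.2 : ℝ) < f q.1} with hS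
  set ψ : sphere (0:E) 1 × Ioi (0:ℝ) → ℝ := fun q => (d:ℝ) * (g q.1 / f q.1) with hψ
  have hfc : Continuous (fun ω : sphere (0:E) 1 => f (ω : E)) := hflip.continuousOn.restrict
  have hgc : Continuous (fun ω : sphere (0:E) 1 => g (ω : E)) := hglip.continuousOn.restrict
  have hSmeas : MeasurableSet S :=
    measurableSet_lt (continuous_subtype_val.comp continuous_snd).measurable
      (hfc.comp continuous_fst).measurable
  have hψc : Continuous ψ := continuous_const.mul
    ((hgc.comp continuous_fst).div (hfc.comp continuous_fst)
      (fun q => ne_of_gt (hfpos _ q.1.2)))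
  -- the transported function
  have key : ∀ p : sphere (0:E) 1 × Ioi (0:ℝ),
      Ω'.indicator (fun y : E => (d:ℝ) * (g (‖y‖⁻¹ • y) / f (‖y‖⁻¹ • y)))
        (((homeomorphUnitSphereProd E).symm p : E)) = S.indicator ψ p := by
    rintro ⟨ω, r⟩
    have hx : (((homeomorphUnitSphereProd E).symm (ω, r)) : E) = (r : ℝ) • (ω : E) := by
      simp
    have hωne : (ω : E) ≠ 0 := ne_zero_of_mem_unit_sphere ω
    have hxne : (r : ℝ) • (ω : E) ≠ 0 := smul_ne_zero (ne_of_gt r.2) hωne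
    have hnn : ‖(r:ℝ) • (ω:E)‖⁻¹ • ((r:ℝ) • (ω:E)) = (ω : E) := by
      rw [normSmul_smul r.2 hωne, normSmul_sphere ω.2]
    have hnorm : ‖(r:ℝ) • (ω:E)‖ = (r:ℝ) := by
      rw [norm_smul, Real.norm_eq_abs, abs_of_pos r.2, mem_sphere_zero_iff_norm.1 ω.2, mul_one]
    rw [hx]
    by_cases hlt : (r:ℝ) < f (ω : E)
    · have hmem : ((r:ℝ) • (ω:E)) ∈ Ω' := ⟨hxne, by rw [hnn, hnorm]; exact hlt⟩
      rw [indicator_of_mem hmem, indicator_of_mem (show (ω, r) ∈ S from hlt), hnn]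
    · have hmem : ((r:ℝ) • (ω:E)) ∉ Ω' := by
        intro hm
        apply hlt
        have h2 := hm.2
        rw [hnn, hnorm] at h2
        exact h2
      rw [indicator_of_notMem hmem, indicator_of_notMem (show (ω, r) ∉ S from hlt)]
  -- integrability
  have hT : (μ.toSphere.prod (Measure.volumeIoiPow (d - 1)))
      (univ ×ˢ Iio (⟨Cf + 1, mem_Ioi.mpr (by linarith)⟩ : Ioi (0:ℝ))) ≠ ⊤ := by
    rw [Measure.prod_prod, Measure.volumeIoiPow_apply_Iio]
    exact ENNReal.mul_ne_top (measure_ne_top _ _) ENNReal.ofReal_ne_top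
  have hST : S ⊆ univ ×ˢ Iio (⟨Cf + 1, mem_Ioi.mpr (by linarith)⟩ : Ioi (0:ℝ)) := by
    rintro ⟨ω, rv, hrv⟩ hq
    refine ⟨mem_univ _, ?_⟩
    have h1 : rv < f (ω : E) := hq
    have h2 : f (ω : E) ≤ Cf := by
      have := hCf _ ω.2
      rw [Real.norm_eq_abs] at this
      exact le_trans (le_abs_self _) this
    simp only [Set.mem_Iio, Subtype.mk_lt_mk]
    linarith
  have hbound : ∀ q : sphere (0:E) 1 × Ioi (0:ℝ), ‖ψ q‖ ≤ (d:ℝ) * (Cg / f ω₀) := by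
    intro q
    rw [hψ]
    rw [Real.norm_eq_abs, abs_mul, Nat.abs_cast, abs_div]
    have h1 : |g (q.1 : E)| ≤ Cg := by
      have := hCg _ q.1.2
      rwa [Real.norm_eq_abs] at this
    have h2 : f ω₀ ≤ |f (q.1 : E)| := le_trans (hmin _ q.1.2) (le_abs_self _)
    have h3 : (0:ℝ) < |f (q.1 : E)| := lt_of_lt_of_le hc h2
    have h4 : |g (q.1 : E)| / |f (q.1 : E)| ≤ Cg / f ω₀ := by
      apply div_le_div₀ (le_trans (abs_nonneg _) h1) h1 hc h2
    have hd0 : (0:ℝ) ≤ d := Nat.cast_nonneg d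
    exact mul_le_mul_of_nonneg_left h4 hd0
  have hψint : Integrable (S.indicator ψ) (μ.toSphere.prod (Measure.volumeIoiPow (d - 1))) := by
    rw [integrable_indicator_iff hSmeas]
    exact (Measure.integrableOn_of_bounded hT hψc.aestronglyMeasurable
      (Filter.Eventually.of_forall hbound)).mono_set hST
  -- the chain
  calc ∫ y in Ω', (d:ℝ) * (g (‖y‖⁻¹ • y) / f (‖y‖⁻¹ • y)) ∂μ
      = ∫ y in {(0:E)}ᶜ,
          Ω'.indicator (fun y : E => (d:ℝ) * (g (‖y‖⁻¹ • y) / f (‖y‖⁻¹ • y))) y ∂μ := by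
        rw [setIntegral_indicator hΩ'meas, inter_eq_right.2 hΩ'sub]
    _ = ∫ x : ({(0:E)}ᶜ : Set E),
          Ω'.indicator (fun y : E => (d:ℝ) * (g (‖y‖⁻¹ • y) / f (‖y‖⁻¹ • y))) x
          ∂(μ.comap Subtype.val) :=
        (integral_subtype_comap (measurableSet_singleton (0:E)).compl _).symm
    _ = ∫ x : ({(0:E)}ᶜ : Set E), S.indicator ψ ((homeomorphUnitSphereProd E) x)
          ∂(μ.comap Subtype.val) := by
        apply integral_congr_ae
        apply Filter.Eventually.of_forall
        intro x
        have h := key ((homeomorphUnitSphereProd E) x)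
        rw [Homeomorph.symm_apply_apply] at h
        exact h
    _ = ∫ p, S.indicator ψ p ∂(μ.toSphere.prod (Measure.volumeIoiPow (d - 1))) :=
        hmp.integral_comp (Homeomorph.measurableEmbedding _) (S.indicator ψ)
    _ = ∫ ω : sphere (0:E) 1, (∫ r : Ioi (0:ℝ), S.indicator ψ (ω, r)
          ∂(Measure.volumeIoiPow (d - 1))) ∂μ.toSphere := integral_prod _ hψint
    _ = ∫ ω : sphere (0:E) 1, g (ω : E) * f (ω : E) ^ (d - 1) ∂μ.toSphere := by
        apply integral_congr_ae
        apply Filter.Eventually.of_forall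
        intro ω
        have hfω : 0 < f (ω : E) := hfpos _ ω.2
        show ∫ r : Ioi (0:ℝ), S.indicator ψ (ω, r) ∂(Measure.volumeIoiPow (d-1))
          = g (ω : E) * f (ω : E) ^ (d - 1)
        have heq : (fun r : Ioi (0:ℝ) => S.indicator ψ (ω, r))
            = (Iio (⟨f (ω : E), hfω⟩ : Ioi (0:ℝ))).indicator
                (fun _ => (d:ℝ) * (g (ω : E) / f (ω : E))) := by
          funext r
          by_cases h : (r : ℝ) < f (ω : E)
          · have hmem : r ∈ Iio (⟨f (ω : E), hfω⟩ : Ioi (0:ℝ)) := show r < ⟨f (ω : E), hfω⟩ from h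
            rw [indicator_of_mem (show (ω, r) ∈ S from h), indicator_of_mem hmem]
          · have hmem : r ∉ Iio (⟨f (ω : E), hfω⟩ : Ioi (0:ℝ)) :=
              fun hh => h hh
            rw [indicator_of_notMem (show (ω, r) ∉ S from h), indicator_of_notMem hmem]
        rw [heq, integral_indicator_const _ measurableSet_Iio, measureReal_def,
          Measure.volumeIoiPow_apply_Iio, ENNReal.toReal_ofReal (by positivity)]
        have hd1 : d - 1 + 1 = d := Nat.succ_pred_eq_of_pos hd
        rw [hd1]
        have hpow : f (ω : E) ^ d = f (ω : E) ^ (d - 1) * f (ω : E) := by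
          rw [← pow_succ, hd1]
        rw [smul_eq_mul, hpow]
        have hdne : (d:ℝ) ≠ 0 := Nat.cast_ne_zero.2 hd.ne'
        field_simp
        rw [Nat.cast_sub (show 1 ≤ d from hd), Nat.cast_one]
        ring

/-- The volume-change identity for star-shaped domains: for a strictly
positive Lipschitz radial function `f` on the unit sphere and Lipschitz `g`, the integral
over `Ω_f` of the divergence of the radial field `y ↦ (g(ω_y)/f(ω_y)) y` equals
`∫_{𝕊^{d-1}} g f^{d-1}` with respect to the surface measure on the sphere. Divergence is
the trace of the Jacobian. -/
theorem divergence_radial_field_eq_sphere_integral {d : ℕ}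
    (f g : EuclideanSpace ℝ (Fin d) → ℝ)
    (hfpos : ∀ ω ∈ sphere (0 : EuclideanSpace ℝ (Fin d)) 1, 0 < f ω)
    (Kf : NNReal) (hflip : LipschitzOnWith Kf f (sphere (0 : EuclideanSpace ℝ (Fin d)) 1))
    (Kg : NNReal) (hglip : LipschitzOnWith Kg g (sphere (0 : EuclideanSpace ℝ (Fin d)) 1)) :
    (∫ y in {x : EuclideanSpace ℝ (Fin d) | x = 0 ∨ ‖x‖ < f (‖x‖⁻¹ • x)},
        LinearMap.trace ℝ (EuclideanSpace ℝ (Fin d))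
          ((fderiv ℝ (fun z : EuclideanSpace ℝ (Fin d) =>
              (g (‖z‖⁻¹ • z) / f (‖z‖⁻¹ • z)) • z) y) :
            EuclideanSpace ℝ (Fin d) →ₗ[ℝ] EuclideanSpace ℝ (Fin d)))
      = ∫ ω : sphere (0 : EuclideanSpace ℝ (Fin d)) 1,
          g (ω : EuclideanSpace ℝ (Fin d)) * f (ω : EuclideanSpace ℝ (Fin d)) ^ (d - 1)
          ∂((volume : Measure (EuclideanSpace ℝ (Fin d))).toSphere) := by
  rcases Nat.eq_zero_or_pos d with hd0 | hd
  · subst hd0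
    haveI : IsEmpty (sphere (0 : EuclideanSpace ℝ (Fin 0)) 1) := by
      constructor
      rintro ⟨x, hx⟩
      rw [mem_sphere_zero_iff_norm] at hx
      rw [Subsingleton.elim x 0] at hx
      simp at hx
    have hz : ∀ y : EuclideanSpace ℝ (Fin 0),
        LinearMap.trace ℝ (EuclideanSpace ℝ (Fin 0))
          ((fderiv ℝ (fun z : EuclideanSpace ℝ (Fin 0) =>
              (g (‖z‖⁻¹ • z) / f (‖z‖⁻¹ • z)) • z) y) :
            EuclideanSpace ℝ (Fin 0) →ₗ[ℝ] EuclideanSpace ℝ (Fin 0)) = 0 := by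
      intro y
      have h : ((fderiv ℝ (fun z : EuclideanSpace ℝ (Fin 0) =>
          (g (‖z‖⁻¹ • z) / f (‖z‖⁻¹ • z)) • z) y) :
            EuclideanSpace ℝ (Fin 0) →ₗ[ℝ] EuclideanSpace ℝ (Fin 0)) = 0 := by
        apply LinearMap.ext; intro x; exact Subsingleton.elim _ _
      rw [h, map_zero]
    simp only [hz]
    rw [integral_zero]
    exact (integral_of_isEmpty).symm
  · exact divergence_radial_field_aux (volume : Measure (EuclideanSpace ℝ (Fin d)))
      finrank_euclideanSpace_fin hd f g hfpos Kf hflip Kg hglip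
end

section
/- Let $J'(f)$ be a finite signed Radon measure on $\mathbb{S}^1$, $f > 0$ Lipschitz, $g$ a minimiser of $v \mapsto \langle J'(f), v\rangle$ over $\{v \in \mathrm{Lip}_1(\mathbb{S}^1) : \int_{\mathbb{S}^1} f v = 0\}$, and $g_h$ a minimiser over $\mathcal{S}_h \cap \mathrm{Lip}_1(\mathbb{S}^1)$ with $\int_{\mathbb{S}^1} f g_h = 0$, where $\mathcal{S}_h$ is the space of continuous piecewise-linear finite elements on a partition of $\mathbb{S}^1$ of maximal element length $h$. Then there exists $C > 0$ independent of $h$ such that $\langle J'(f), g\rangle \leq \langle J'(f), g_h\rangle \leq \langle J'(f), g\rangle + C h \|J'(f)\|_{\mathcal{M}}$. -/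
open MeasureTheory Set Real

/-- The pairing `⟨ρ, v⟩ = ∫ v dρ` of a signed measure on `ℝ` with a function, via the
Jordan decomposition. -/
noncomputable def pairingR (ρ : SignedMeasure ℝ) (v : ℝ → ℝ) : ℝ :=
  (∫ t, v t ∂ρ.toJordanDecomposition.posPart)
    - ∫ t, v t ∂ρ.toJordanDecomposition.negPart

noncomputable def pfun {n : ℕ} (θ : Fin (n+1) → ℝ) (k : ℕ) : ℝ :=
  θ ⟨min k n, Nat.lt_succ_of_le (min_le_right _ _)⟩

noncomputable def slopeF {n : ℕ} (θ : Fin (n+1) → ℝ) (g : ℝ → ℝ) (k : ℕ) : ℝ :=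
  (g (pfun θ (k+1)) - g (pfun θ k)) / (pfun θ (k+1) - pfun θ k)

noncomputable def idxF {n : ℕ} (θ : Fin (n+1) → ℝ) (t : ℝ) : ℕ :=
  Nat.findGreatest (fun k => pfun θ k ≤ t) (n-1)

noncomputable def interpF {n : ℕ} (θ : Fin (n+1) → ℝ) (g : ℝ → ℝ) (t : ℝ) : ℝ :=
  g (pfun θ (idxF θ t)) + (t - pfun θ (idxF θ t)) * slopeF θ g (idxF θ t)

section Lemmas
variable {n : ℕ} {θ : Fin (n+1) → ℝ} {g : ℝ → ℝ}

lemma pfun_mono (hmono : StrictMono θ) : Monotone (pfun θ) := by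
  intro k l hkl
  exact (hmono.monotone (by simp [Fin.mk_le_mk]; omega))

lemma pfun_lt (hmono : StrictMono θ) {k : ℕ} (hk : k < n) :
    pfun θ k < pfun θ (k+1) := by
  apply hmono
  simp [Fin.mk_lt_mk]; omega

lemma pfun_zero : pfun θ 0 = θ 0 := by
  unfold pfun; congr 1

lemma pfun_top : pfun θ n = θ (Fin.last n) := by
  unfold pfun; congr 1; ext; simp [Fin.last]

lemma idx_le {t : ℝ} : idxF θ t ≤ n - 1 := Nat.findGreatest_le _

lemma idx_lt (hn : 0 < n) {t : ℝ} : idxF θ t < n :=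
  lt_of_le_of_lt idx_le (by omega)

lemma pfun_idx_le (h0 : θ 0 = 0) {t : ℝ} (ht : 0 ≤ t) : pfun θ (idxF θ t) ≤ t := by
  have := Nat.findGreatest_spec (P := fun k => pfun θ k ≤ t) (m := 0) (n := n - 1)
    (Nat.zero_le _) (by show pfun θ 0 ≤ t; rw [pfun_zero, h0]; exact ht)
  exact this

lemma le_pfun_idx_succ (hmono : StrictMono θ) (hn : 0 < n) {t : ℝ}
    (ht : t ≤ θ (Fin.last n)) : t ≤ pfun θ (idxF θ t + 1) := by
  classical
  by_cases hcase : idxF θ t + 1 ≤ n - 1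
  · have := Nat.findGreatest_is_greatest (P := fun k => pfun θ k ≤ t)
      (Nat.lt_succ_self _) hcase
    unfold idxF
    exact le_of_not_ge (by exact_mod_cast this)
  · have h1 : idxF θ t = n - 1 := le_antisymm idx_le (by omega)
    have h2 : idxF θ t + 1 = n := by omega
    rw [h2, pfun_top]
    exact ht

lemma idx_eq (hmono : StrictMono θ) {k : ℕ} (hk : k < n) {t : ℝ}
    (h1 : pfun θ k ≤ t) (h2 : t < pfun θ (k+1)) : idxF θ t = k := by
  classical
  unfold idxF
  rw [Nat.findGreatest_eq_iff]
  refine ⟨by omega, fun _ => h1, fun j hj hjb hP => ?_⟩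
  have : pfun θ (k+1) ≤ pfun θ j := pfun_mono hmono (by omega)
  linarith

lemma interp_node (hmono : StrictMono θ) (hn : 0 < n) {k : ℕ} (hk : k ≤ n) :
    interpF θ g (pfun θ k) = g (pfun θ k) := by
  rcases lt_or_eq_of_le hk with hk' | rfl
  · have : idxF θ (pfun θ k) = k :=
      idx_eq hmono hk' le_rfl (pfun_lt hmono hk')
    unfold interpF
    rw [this]; ring
  · have hne : pfun θ (k - 1 + 1) - pfun θ (k-1) ≠ 0 :=
      ne_of_gt (sub_pos.2 (pfun_lt hmono (by omega)))
    have hkk : k - 1 + 1 = k := by omega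
    have hidx : idxF θ (pfun θ k) = k - 1 := by
      classical
      refine le_antisymm (by simpa using (idx_le (θ := θ))) ?_
      exact Nat.le_findGreatest le_rfl
        (by exact pfun_mono hmono (by omega))
    unfold interpF slopeF
    rw [hidx, hkk]
    rw [hkk] at hne
    field_simp
    ring

lemma interp_linear (hmono : StrictMono θ) (hn : 0 < n) {k : ℕ} (hk : k < n) :
    ∀ t ∈ Icc (pfun θ k) (pfun θ (k+1)), interpF θ g t =
      slopeF θ g k * t + (g (pfun θ k) - slopeF θ g k * pfun θ k) := by
  rintro t ⟨h1, h2⟩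
  rcases lt_or_eq_of_le h2 with h2' | rfl
  · have : idxF θ t = k := idx_eq hmono hk h1 h2'
    unfold interpF
    rw [this]; ring
  · rw [interp_node hmono hn (by omega)]
    have hne : pfun θ (k+1) - pfun θ k ≠ 0 :=
      ne_of_gt (sub_pos.2 (pfun_lt hmono hk))
    unfold slopeF
    field_simp
    ring
end Lemmas
section Lemmas2
variable {n : ℕ} {θ : Fin (n+1) → ℝ} {g : ℝ → ℝ}

lemma slope_abs (hmono : StrictMono θ) (hg : LipschitzWith 1 g) {k : ℕ} (hk : k < n) :
    |slopeF θ g k| ≤ 1 := by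
  have hlt := pfun_lt hmono hk
  have hd : |g (pfun θ (k+1)) - g (pfun θ k)| ≤ pfun θ (k+1) - pfun θ k := by
    have h1 := hg.dist_le_mul (pfun θ (k+1)) (pfun θ k)
    simpa [Real.dist_eq, abs_of_pos (sub_pos.2 hlt)] using h1
  rw [slopeF, abs_div, abs_of_pos (sub_pos.2 hlt)]
  exact (div_le_one (sub_pos.2 hlt)).2 hd

lemma interp_lipOn (hmono : StrictMono θ) (hn : 0 < n) (h0 : θ 0 = 0)
    (hg : LipschitzWith 1 g) :
    ∀ s t : ℝ, 0 ≤ s → s ≤ t → t ≤ θ (Fin.last n) →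
      |interpF θ g t - interpF θ g s| ≤ t - s := by
  have key2 : ∀ m : ℕ, m ≤ n → ∀ s t : ℝ, 0 ≤ s → s ≤ t → t ≤ pfun θ m →
      |interpF θ g t - interpF θ g s| ≤ t - s := by
    intro m
    induction m with
    | zero =>
      intro _ s t hs hst ht
      rw [pfun_zero, h0] at ht
      have hts : t = s := le_antisymm (by linarith) hst
      rw [hts]
      simp
    | succ m ih =>
      intro hm s t hs hst ht
      have hmn : m < n := by omega
      by_cases hcase : t ≤ pfun θ m
      · exact ih (by omega) s t hs hst hcase
      · push_neg at hcase
        have hlin := interp_linear (g := g) hmono hn hmn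
        have hsl := slope_abs hmono hg hmn
        by_cases hscase : pfun θ m ≤ s
        · have e1 := hlin t ⟨le_trans hscase hst, ht⟩
          have e2 := hlin s ⟨hscase, le_trans hst ht⟩
          rw [e1, e2]
          have hr : slopeF θ g m * t + (g (pfun θ m) - slopeF θ g m * pfun θ m)
              - (slopeF θ g m * s + (g (pfun θ m) - slopeF θ g m * pfun θ m))
              = slopeF θ g m * (t - s) := by ring
          rw [hr, abs_mul, abs_of_nonneg (by linarith : (0:ℝ) ≤ t - s)]
          nlinarith [abs_nonneg (slopeF θ g m)]
        · push_neg at hscase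
          have i1 := ih (by omega) s (pfun θ m) hs hscase.le le_rfl
          have e1 := hlin t ⟨hcase.le, ht⟩
          have e2 := hlin (pfun θ m) ⟨le_rfl, (pfun_lt hmono hmn).le⟩
          have i2 : |interpF θ g t - interpF θ g (pfun θ m)| ≤ t - pfun θ m := by
            rw [e1, e2]
            have hr : slopeF θ g m * t + (g (pfun θ m) - slopeF θ g m * pfun θ m)
                - (slopeF θ g m * pfun θ m + (g (pfun θ m) - slopeF θ g m * pfun θ m))
                = slopeF θ g m * (t - pfun θ m) := by ring
            rw [hr, abs_mul, abs_of_nonneg (by linarith : (0:ℝ) ≤ t - pfun θ m)]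
            nlinarith [abs_nonneg (slopeF θ g m)]
          calc |interpF θ g t - interpF θ g s|
              ≤ |interpF θ g t - interpF θ g (pfun θ m)|
                + |interpF θ g (pfun θ m) - interpF θ g s| := abs_sub_le _ _ _
            _ ≤ (t - pfun θ m) + (pfun θ m - s) := add_le_add i2 i1
            _ = t - s := by ring
  intro s t hs hst ht
  exact key2 n le_rfl s t hs hst (by rwa [pfun_top])

lemma interp_close (hmono : StrictMono θ) (hn : 0 < n) (h0 : θ 0 = 0)
    (hg : LipschitzWith 1 g) {h : ℝ}
    (hmesh : ∀ k, k < n → pfun θ (k+1) - pfun θ k ≤ h) {t : ℝ} (ht0 : 0 ≤ t)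
    (ht1 : t ≤ θ (Fin.last n)) : |interpF θ g t - g t| ≤ 2 * h := by
  set k := idxF θ t with hkdef
  have hk : k < n := idx_lt hn
  have h1 : pfun θ k ≤ t := pfun_idx_le h0 ht0
  have h2 : t ≤ pfun θ (k+1) := le_pfun_idx_succ hmono hn ht1
  have hmesh' := hmesh k hk
  have hsl := slope_abs hmono hg hk
  have hgd : |g (pfun θ k) - g t| ≤ t - pfun θ k := by
    have hq := hg.dist_le_mul (pfun θ k) t
    simpa [Real.dist_eq, abs_of_nonpos (by linarith : pfun θ k - t ≤ 0)] using hq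
  have hmul : |(t - pfun θ k) * slopeF θ g k| ≤ t - pfun θ k := by
    rw [abs_mul, abs_of_nonneg (by linarith : (0:ℝ) ≤ t - pfun θ k)]
    nlinarith [abs_nonneg (slopeF θ g k)]
  have he : interpF θ g t - g t
      = (g (pfun θ k) - g t) + (t - pfun θ k) * slopeF θ g k := by
    unfold interpF
    rw [← hkdef]; ring
  rw [he]
  calc |(g (pfun θ k) - g t) + (t - pfun θ k) * slopeF θ g k|
      ≤ |g (pfun θ k) - g t| + |(t - pfun θ k) * slopeF θ g k| := abs_add_le _ _
    _ ≤ (t - pfun θ k) + (t - pfun θ k) := add_le_add hgd hmul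
    _ ≤ 2 * h := by linarith

end Lemmas2

lemma lip_of_periodic {F : ℝ → ℝ} {T : ℝ} (hT : 0 < T) (hper : Function.Periodic F T)
    (hlip : LipschitzOnWith 1 F (Icc 0 T)) : LipschitzWith 1 F := by
  have hd : ∀ a ∈ Icc (0:ℝ) T, ∀ b ∈ Icc (0:ℝ) T, a ≤ b → |F b - F a| ≤ b - a := by
    intro a ha b hb hab
    have h1 := (lipschitzOnWith_iff_dist_le_mul.1 hlip) b hb a ha
    simp only [Real.dist_eq, NNReal.coe_one, one_mul] at h1
    have h2 : |b - a| = b - a := abs_of_nonneg (by linarith)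
    linarith [h1, h2.le, h2.ge]
  have key : ∀ m : ℕ, ∀ a b : ℝ, a ∈ Icc 0 T → a ≤ b → b ≤ (m + 1) * T →
      |F b - F a| ≤ b - a := by
    intro m
    induction m with
    | zero =>
      intro a b ha hab hb
      push_cast at hb
      exact hd a ha b ⟨le_trans ha.1 hab, by linarith⟩ hab
    | succ m ih =>
      intro a b ha hab hb
      push_cast at hb
      by_cases hbm : b ≤ (m + 1) * T
      · exact ih a b ha hab hbm
      · push_neg at hbm
        have hmT : (0:ℝ) ≤ (m:ℝ) * T := mul_nonneg (Nat.cast_nonneg m) hT.le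
        have hTb : T ≤ b := by nlinarith
        have h1 : |F T - F a| ≤ T - a := hd a ha T ⟨hT.le, le_refl T⟩ ha.2
        have h2 : |F b - F T| ≤ b - T := by
          have hFb : F (b - T) = F b := hper.sub_eq b
          have hFT : F T = F 0 := by simpa using hper 0
          have hr : ((m:ℝ) + 1 + 1) * T = ((m:ℝ) + 1) * T + T := by ring
          have := ih 0 (b - T) ⟨le_refl 0, hT.le⟩ (by linarith) (by linarith)
          rw [hFb, ← hFT] at this
          simpa using this
        calc |F b - F a| ≤ |F b - F T| + |F T - F a| := abs_sub_le _ _ _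
          _ ≤ (b - T) + (T - a) := add_le_add h2 h1
          _ = b - a := by ring
  apply LipschitzWith.of_dist_le_mul
  have main : ∀ x y : ℝ, x ≤ y → |F y - F x| ≤ y - x := by
    intro x y hxy
    set k : ℤ := ⌊x / T⌋ with hk
    have hx' : x - k * T ∈ Icc (0:ℝ) T :=
      ⟨Int.sub_floor_div_mul_nonneg x hT, le_of_lt (Int.sub_floor_div_mul_lt x hT)⟩
    have hFx : F (x - k * T) = F x := hper.sub_int_mul_eq k
    have hFy : F (y - k * T) = F y := hper.sub_int_mul_eq k
    obtain ⟨m, hm⟩ := exists_nat_ge ((y - k * T) / T)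
    have hym : y - k * T ≤ (m + 1) * T := by
      have h3 : y - k * T ≤ m * T := by
        rw [div_le_iff₀ hT] at hm; linarith
      have h4 : ((m:ℝ) + 1) * T = (m:ℝ) * T + T := by ring
      linarith
    have := key m (x - k * T) (y - k * T) hx' (by linarith) hym
    rw [hFx, hFy] at this
    simpa using this
  intro x y
  rw [Real.dist_eq, Real.dist_eq, NNReal.coe_one, one_mul]
  rcases le_total x y with h | h
  · have hxy : |x - y| = y - x := by rw [abs_sub_comm]; exact abs_of_nonneg (by linarith)
    calc |F x - F y| = |F y - F x| := abs_sub_comm _ _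
      _ ≤ y - x := main x y h
      _ = |x - y| := hxy.symm
  · have hxy : |x - y| = x - y := abs_of_nonneg (by linarith)
    exact (main y x h).trans_eq hxy.symm
section Lemmas3
variable {n : ℕ} {θ : Fin (n+1) → ℝ} {g : ℝ → ℝ}

lemma pfun_castSucc (i : Fin n) : pfun θ (i : ℕ) = θ i.castSucc := by
  unfold pfun; congr 1
  ext
  simp only [Fin.coe_castSucc]
  omega

lemma pfun_succ (i : Fin n) : pfun θ ((i : ℕ) + 1) = θ i.succ := by
  unfold pfun; congr 1
  ext
  simp only [Fin.val_succ]
  omega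

lemma exists_interp (hn : 0 < n) (hmono : StrictMono θ)
    (h0 : θ 0 = 0) (hlast : θ (Fin.last n) = 2*π) {h : ℝ}
    (hmesh : ∀ i : Fin n, θ i.succ - θ i.castSucc ≤ h)
    (hgper : Function.Periodic g (2*π)) (hg : LipschitzWith 1 g) :
    ∃ w : ℝ → ℝ, Function.Periodic w (2*π) ∧ LipschitzWith 1 w ∧
      (∀ i : Fin n, ∃ a b : ℝ, ∀ t ∈ Icc (θ i.castSucc) (θ i.succ), w t = a * t + b) ∧
      (∀ t, |w t - g t| ≤ 2 * h) := by
  have hT : (0:ℝ) < 2*π := by positivity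
  set T : ℝ := 2*π with hTdef
  set w : ℝ → ℝ := fun t => interpF θ g (t - ⌊t / T⌋ * T) with hw
  have hfr0 : ∀ t : ℝ, 0 ≤ t - ⌊t / T⌋ * T := fun t => Int.sub_floor_div_mul_nonneg t hT
  have hfr1 : ∀ t : ℝ, t - ⌊t / T⌋ * T < T := fun t => Int.sub_floor_div_mul_lt t hT
  have hper : Function.Periodic w T := by
    intro t
    have hfl : ⌊(t + T) / T⌋ = ⌊t / T⌋ + 1 := by
      rw [add_div, div_self hT.ne', Int.floor_add_one]
    simp only [hw]
    congr 1
    rw [hfl]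
    push_cast
    ring
  have hmesh' : ∀ k, k < n → pfun θ (k+1) - pfun θ k ≤ h := by
    intro k hk
    have := hmesh ⟨k, hk⟩
    rw [← pfun_castSucc (θ := θ) ⟨k, hk⟩, ← pfun_succ (θ := θ) ⟨k, hk⟩] at this
    simpa using this
  have hElast : θ (Fin.last n) = T := hlast
  have hinterpT : interpF θ g T = g T := by
    have := interp_node (g := g) hmono hn (le_refl n)
    rwa [pfun_top, hElast] at this
  have hinterp0 : interpF θ g 0 = g 0 := by
    have := interp_node (g := g) hmono hn (Nat.zero_le n)
    rwa [pfun_zero, h0] at this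
  have hgT : g T = g 0 := by simpa using hgper 0
  have hEq : ∀ t ∈ Icc (0:ℝ) T, w t = interpF θ g t := by
    rintro t ⟨ht0, ht1⟩
    rcases lt_or_eq_of_le ht1 with hlt | heq
    · have hfl : ⌊t / T⌋ = 0 :=
        Int.floor_eq_zero_iff.2 ⟨div_nonneg ht0 hT.le, (div_lt_one hT).2 hlt⟩
      simp [hw, hfl]
    · rw [heq]
      have hfl : ⌊T / T⌋ = 1 := by rw [div_self hT.ne']; exact Int.floor_one
      simp only [hw]
      rw [hfl]
      push_cast
      rw [show T - 1 * T = 0 by ring]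
      rw [hinterp0, hinterpT, hgT]
  have hlipOn := interp_lipOn (g := g) hmono hn h0 hg
  have hwlip : LipschitzWith 1 w := by
    apply lip_of_periodic hT hper
    rw [lipschitzOnWith_iff_dist_le_mul]
    intro x hx y hy
    rw [hEq x hx, hEq y hy, Real.dist_eq, Real.dist_eq, NNReal.coe_one, one_mul]
    rcases le_total y x with hxy | hxy
    · have := hlipOn y x hy.1 hxy (hx.2.trans_eq hElast.symm)
      rw [abs_of_nonneg (by linarith : (0:ℝ) ≤ x - y)]
      exact this
    · have := hlipOn x y hx.1 hxy (hy.2.trans_eq hElast.symm)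
      rw [abs_of_nonpos (by linarith : x - y ≤ 0)]
      calc |interpF θ g x - interpF θ g y|
          = |interpF θ g y - interpF θ g x| := abs_sub_comm _ _
        _ ≤ y - x := this
        _ = -(x - y) := by ring
  refine ⟨w, hper, hwlip, ?_, ?_⟩
  · intro i
    refine ⟨slopeF θ g (i : ℕ), g (pfun θ (i : ℕ)) - slopeF θ g (i : ℕ) * pfun θ (i : ℕ), ?_⟩
    intro t htmem
    have hsub : t ∈ Icc (0:ℝ) T := by
      constructor
      · have : θ 0 ≤ θ i.castSucc := hmono.monotone (Fin.zero_le _)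
        rw [h0] at this
        linarith [htmem.1]
      · have : θ i.succ ≤ θ (Fin.last n) := hmono.monotone (Fin.le_last _)
        rw [hElast] at this
        linarith [htmem.2]
    rw [hEq t hsub]
    apply interp_linear hmono hn i.isLt
    rw [pfun_castSucc i, pfun_succ i]
    exact htmem
  · intro t
    have hg2 : g (t - ⌊t / T⌋ * T) = g t := hgper.sub_int_mul_eq _
    have hcl := interp_close hmono hn h0 hg hmesh' (hfr0 t)
      ((hfr1 t).le.trans_eq hElast.symm)
    rw [hg2] at hcl
    exact hcl

end Lemmas3

lemma bdd_of_per {u : ℝ → ℝ} {T : ℝ} (hT : 0 < T) (hper : Function.Periodic u T)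
    (hc : Continuous u) : ∃ M : ℝ, ∀ t, |u t| ≤ M := by
  obtain ⟨M, hM⟩ := (isCompact_Icc (a := (0:ℝ)) (b := T)).exists_bound_of_continuousOn
    hc.continuousOn
  refine ⟨M, fun t => ?_⟩
  obtain ⟨y, hy, hxy⟩ := hper.exists_mem_Ico₀ hT t
  rw [hxy]
  simpa [Real.norm_eq_abs] using hM y ⟨hy.1, hy.2.le⟩

lemma integrable_bdd_cont {μ : Measure ℝ} [IsFiniteMeasure μ] {u : ℝ → ℝ}
    (hc : Continuous u) {M : ℝ} (hb : ∀ t, |u t| ≤ M) : Integrable u μ :=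
  ⟨hc.aestronglyMeasurable, HasFiniteIntegral.of_bounded (C := M)
    (Filter.Eventually.of_forall (fun t => by simpa [Real.norm_eq_abs] using hb t))⟩

lemma pairing_close (ρ : SignedMeasure ℝ) {u v : ℝ → ℝ} {T : ℝ} (hT : 0 < T)
    (huper : Function.Periodic u T) (hvper : Function.Periodic v T)
    (huc : Continuous u) (hvc : Continuous v) {δ : ℝ}
    (hclose : ∀ t, |u t - v t| ≤ δ) :
    pairingR ρ u ≤ pairingR ρ v + δ * (ρ.totalVariation Set.univ).toReal := by
  obtain ⟨Mu, hMu⟩ := bdd_of_per hT huper huc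
  obtain ⟨Mv, hMv⟩ := bdd_of_per hT hvper hvc
  set μp := ρ.toJordanDecomposition.posPart with hμp
  set μn := ρ.toJordanDecomposition.negPart with hμn
  have hIup : Integrable u μp := integrable_bdd_cont huc hMu
  have hIvp : Integrable v μp := integrable_bdd_cont hvc hMv
  have hIun : Integrable u μn := integrable_bdd_cont huc hMu
  have hIvn : Integrable v μn := integrable_bdd_cont hvc hMv
  have hsubp : ∫ t, u t ∂μp - ∫ t, v t ∂μp = ∫ t, (u t - v t) ∂μp :=
    (integral_sub hIup hIvp).symm
  have hsubn : ∫ t, u t ∂μn - ∫ t, v t ∂μn = ∫ t, (u t - v t) ∂μn :=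
    (integral_sub hIun hIvn).symm
  have hbp : |∫ t, (u t - v t) ∂μp| ≤ δ * (μp Set.univ).toReal := by
    have := norm_integral_le_of_norm_le_const (μ := μp) (f := fun t => u t - v t)
      (C := δ) (Filter.Eventually.of_forall fun t => by
        simpa [Real.norm_eq_abs] using hclose t)
    simpa [Real.norm_eq_abs, measureReal_def] using this
  have hbn : |∫ t, (u t - v t) ∂μn| ≤ δ * (μn Set.univ).toReal := by
    have := norm_integral_le_of_norm_le_const (μ := μn) (f := fun t => u t - v t)
      (C := δ) (Filter.Eventually.of_forall fun t => by
        simpa [Real.norm_eq_abs] using hclose t)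
    simpa [Real.norm_eq_abs, measureReal_def] using this
  have hTV : (ρ.totalVariation Set.univ).toReal
      = (μp Set.univ).toReal + (μn Set.univ).toReal := by
    have hdef : ρ.totalVariation = μp + μn := rfl
    rw [hdef, Measure.add_apply,
      ENNReal.toReal_add (measure_ne_top _ _) (measure_ne_top _ _)]
  have e1 : ∫ t, u t ∂μp - ∫ t, v t ∂μp ≤ δ * (μp Set.univ).toReal := by
    rw [hsubp]; exact (le_abs_self _).trans hbp
  have e2 : ∫ t, v t ∂μn - ∫ t, u t ∂μn ≤ δ * (μn Set.univ).toReal := by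
    have h' : ∫ t, v t ∂μn - ∫ t, u t ∂μn = -(∫ t, (u t - v t) ∂μn) := by
      rw [← hsubn]; ring
    rw [h']; exact (neg_le_abs _).trans hbn
  have hδsplit : δ * ((μp Set.univ).toReal + (μn Set.univ).toReal)
      = δ * (μp Set.univ).toReal + δ * (μn Set.univ).toReal := by ring
  unfold pairingR
  rw [hTV, ← hμp, ← hμn]
  linarith

/-- FEM approximation of the steepest descent on `𝕊¹` (modelled by
`2π`-periodic functions on `ℝ`): if `g` minimises `v ↦ ⟨J'(f), v⟩` over
`{v ∈ Lip₁(𝕊¹) : ∫ f v = 0}` and `g_h` minimises it over the continuous piecewise-linear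
finite element functions in that set, on a partition of maximal element length `h`, then
`⟨J'(f), g⟩ ≤ ⟨J'(f), g_h⟩ ≤ ⟨J'(f), g⟩ + C h ‖J'(f)‖_ℳ` with `C` independent of `h`. -/
theorem fem_descent_estimate_circle
    (ρ : SignedMeasure ℝ) (hρsupp : ρ.restrict (Ico 0 (2 * π)) = ρ)
    (f : ℝ → ℝ) (hfper : Function.Periodic f (2 * π)) (hfpos : ∀ t, 0 < f t)
    (Kf : NNReal) (hflip : LipschitzWith Kf f) :
    ∃ C > (0 : ℝ), ∀ h > (0 : ℝ), ∀ (n : ℕ), 0 < n → ∀ θ : Fin (n + 1) → ℝ,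
      StrictMono θ → θ 0 = 0 → θ (Fin.last n) = 2 * π →
      (∀ i : Fin n, θ i.succ - θ i.castSucc ≤ h) →
      ∀ g gh : ℝ → ℝ,
      -- `g` is a continuous minimiser
      (Function.Periodic g (2 * π) ∧ LipschitzWith 1 g ∧
        (∫ t in Ico 0 (2 * π), f t * g t) = 0) →
      (∀ v : ℝ → ℝ, Function.Periodic v (2 * π) → LipschitzWith 1 v →
        (∫ t in Ico 0 (2 * π), f t * v t) = 0 → pairingR ρ g ≤ pairingR ρ v) →
      -- `g_h` is a minimiser over the piecewise-linear finite element space `𝒮_h`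
      (Function.Periodic gh (2 * π) ∧ LipschitzWith 1 gh ∧
        (∫ t in Ico 0 (2 * π), f t * gh t) = 0 ∧
        (∀ i : Fin n, ∃ a b : ℝ, ∀ t ∈ Icc (θ i.castSucc) (θ i.succ),
          gh t = a * t + b)) →
      (∀ v : ℝ → ℝ, Function.Periodic v (2 * π) → LipschitzWith 1 v →
        (∫ t in Ico 0 (2 * π), f t * v t) = 0 →
        (∀ i : Fin n, ∃ a b : ℝ, ∀ t ∈ Icc (θ i.castSucc) (θ i.succ),
          v t = a * t + b) →
        pairingR ρ gh ≤ pairingR ρ v) →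
      pairingR ρ g ≤ pairingR ρ gh ∧
        pairingR ρ gh ≤ pairingR ρ g
          + C * h * (ρ.totalVariation Set.univ).toReal := by
  refine ⟨4, by norm_num, ?_⟩
  intro h hh n hn θ hθmono hθ0 hθlast hθmesh g gh hgprops hmin1 hghprops hmin2
  obtain ⟨hgper, hglip, hgint⟩ := hgprops
  obtain ⟨hghper, hghlip, hghint, -⟩ := hghprops
  have first : pairingR ρ g ≤ pairingR ρ gh := hmin1 gh hghper hghlip hghint
  refine ⟨first, ?_⟩
  obtain ⟨w, hwper, hwlip, hwpieces, hwclose⟩ :=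
    exists_interp hn hθmono hθ0 hθlast hθmesh hgper hglip
  have hπ := Real.pi_pos
  have hT : (0:ℝ) < 2*π := by positivity
  have hfc : Continuous f := hflip.continuous
  have hwc : Continuous w := hwlip.continuous
  have hgc : Continuous g := hglip.continuous
  have hmeasS : MeasurableSet (Ico (0:ℝ) (2*π)) := measurableSet_Ico
  have intOn : ∀ u : ℝ → ℝ, Continuous u → IntegrableOn u (Ico (0:ℝ) (2*π)) volume :=
    fun u hu => (hu.continuousOn.integrableOn_compact isCompact_Icc).mono_set
      Ico_subset_Icc_self
  have hIf : IntegrableOn f (Ico (0:ℝ) (2*π)) volume := intOn f hfc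
  have hIfw : IntegrableOn (fun t => f t * w t) (Ico (0:ℝ) (2*π)) volume :=
    intOn _ (hfc.mul hwc)
  have hIfg : IntegrableOn (fun t => f t * g t) (Ico (0:ℝ) (2*π)) volume :=
    intOn _ (hfc.mul hgc)
  set I : ℝ := ∫ t in Ico (0:ℝ) (2*π), f t with hI
  have hIpos : 0 < I := by
    rw [hI, setIntegral_pos_iff_support_of_nonneg_ae
      (Filter.Eventually.of_forall fun t => (hfpos t).le) hIf]
    have hsupp : Function.support f = Set.univ :=
      Set.eq_univ_of_forall fun t => (hfpos t).ne'
    rw [hsupp, Set.univ_inter, Real.volume_Ico]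
    exact ENNReal.ofReal_pos.2 (by linarith)
  set c : ℝ := (∫ t in Ico (0:ℝ) (2*π), f t * w t) / I with hc
  set v : ℝ → ℝ := fun t => w t - c with hv
  have hvper : Function.Periodic v (2*π) := fun t => by simp only [hv]; rw [hwper t]
  have hvlip : LipschitzWith 1 v := by
    apply LipschitzWith.of_dist_le_mul
    intro x y
    have := hwlip.dist_le_mul x y
    simpa [hv, Real.dist_eq, sub_sub_sub_cancel_right] using this
  have hvc : Continuous v := hwc.sub continuous_const
  have hvint : (∫ t in Ico (0:ℝ) (2*π), f t * v t) = 0 := by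
    have hcongr : (∫ t in Ico (0:ℝ) (2*π), f t * v t)
        = ∫ t in Ico (0:ℝ) (2*π), (f t * w t - c * f t) := by
      apply integral_congr_ae
      exact Filter.Eventually.of_forall fun t => by simp only [hv]; ring
    rw [hcongr, integral_sub hIfw (hIf.const_mul c), integral_const_mul, ← hI,
      hc, div_mul_cancel₀ _ hIpos.ne']
    ring
  have hcabs : |c| ≤ 2*h := by
    have hfwg : (∫ t in Ico (0:ℝ) (2*π), f t * w t)
        = ∫ t in Ico (0:ℝ) (2*π), f t * (w t - g t) := by
      have hcongr : (∫ t in Ico (0:ℝ) (2*π), f t * (w t - g t))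
          = ∫ t in Ico (0:ℝ) (2*π), (f t * w t - f t * g t) := by
        apply integral_congr_ae
        exact Filter.Eventually.of_forall fun t => by ring
      rw [hcongr, integral_sub hIfw hIfg, hgint, sub_zero]
    have hb1 : |∫ t in Ico (0:ℝ) (2*π), f t * (w t - g t)|
        ≤ ∫ t in Ico (0:ℝ) (2*π), |f t * (w t - g t)| := by
      have hni := norm_integral_le_integral_norm (μ := volume.restrict (Ico (0:ℝ) (2*π)))
        (f := fun t => f t * (w t - g t))
      simp only [Real.norm_eq_abs] at hni
      exact hni
    have hb2 : (∫ t in Ico (0:ℝ) (2*π), |f t * (w t - g t)|)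
        ≤ ∫ t in Ico (0:ℝ) (2*π), 2*h * f t := by
      apply setIntegral_mono_on (intOn _ ((hfc.mul (hwc.sub hgc)).abs))
        ((intOn f hfc).const_mul _) hmeasS
      intro t _
      rw [Pi.mul_apply, Pi.sub_apply, abs_mul, abs_of_pos (hfpos t)]
      calc f t * |w t - g t| ≤ f t * (2*h) :=
            mul_le_mul_of_nonneg_left (hwclose t) (hfpos t).le
        _ = 2*h * f t := by ring
    have hb3 : (∫ t in Ico (0:ℝ) (2*π), 2*h * f t) = 2*h*I := by
      rw [integral_const_mul, hI]
    rw [hc, abs_div, abs_of_pos hIpos, div_le_iff₀ hIpos, hfwg]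
    calc |∫ t in Ico (0:ℝ) (2*π), f t * (w t - g t)|
        ≤ ∫ t in Ico (0:ℝ) (2*π), 2*h * f t := le_trans hb1 hb2
      _ = 2*h*I := hb3
  have hvclose : ∀ t, |v t - g t| ≤ 4*h := by
    intro t
    have h1 := hwclose t
    have h2 : v t - g t = (w t - g t) - c := by simp only [hv]; ring
    rw [h2]
    calc |(w t - g t) - c| ≤ |w t - g t| + |c| := abs_sub _ _
      _ ≤ 2*h + 2*h := add_le_add h1 hcabs
      _ = 4*h := by ring
  have step2 : pairingR ρ gh ≤ pairingR ρ v := by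
    apply hmin2 v hvper hvlip hvint
    intro i
    obtain ⟨a, b, hab⟩ := hwpieces i
    exact ⟨a, b - c, fun t ht => by simp only [hv]; rw [hab t ht]; ring⟩
  have step3 : pairingR ρ v ≤ pairingR ρ g + (4*h) * (ρ.totalVariation Set.univ).toReal :=
    pairing_close ρ hT hvper hgper hvc hgc hvclose
  calc pairingR ρ gh ≤ pairingR ρ v := step2
    _ ≤ pairingR ρ g + (4*h) * (ρ.totalVariation Set.univ).toReal := step3
    _ = pairingR ρ g + 4 * h * (ρ.totalVariation Set.univ).toReal := by ring
end
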